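/- arXiv:1410.8043 — 2 statements merged into one kernel-verified Lean document; each statement's English description precedes it below -/
import Mathlib

section
/- Fix d ≥ 1, T ≥ 1, reals η > 0, L ≥ 0, F ≥ 0, v₀ ≥ 0, and a point x* ∈ ℝ^d. For t = 1,…,T let f_t : ℝ^d → ℝ be convex and differentiable with ‖∇f_t(x)‖₂ ≤ L for all x. Let η_t = η/√t. Let (x̂_t)_{t≥1} and (x̆_t)_{t=1..T} be sequences in ℝ^d satisfying the gradient-descent recursion x̂_{t+1} = x̂_t − η_t ∇f_t(x̆_t), the value-bound (VAP) condition ‖x̆_t − x̂_t‖_∞ ≤ v₀/√t for all t = 1,…,T, and the bounded-diameter condition ½‖x* − x̂_t‖₂² ≤ F² for all t = 1,…,T+1. Then the regret satisfies ∑_{t=1}^T ( f_t(x̆_t) − f_t(x*) ) ≤ η L² √T + (F²/η) √T + 2 √d · L · v₀ · √T; in particular the regret is O(√T). -/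
set_option maxHeartbeats 1000000

open Real

section Aux
open RealInnerProductSpace

lemma grad_ineq {d : ℕ} {f : EuclideanSpace ℝ (Fin d) → ℝ}
    (hconv : ConvexOn ℝ Set.univ f) (hdiff : Differentiable ℝ f)
    (x y : EuclideanSpace ℝ (Fin d)) :
    ⟪gradient f x, y - x⟫ ≤ f y - f x := by
  set φ : ℝ → ℝ := fun s => f (x + s • (y - x)) with hφdef
  have hline : ∀ s : ℝ, (AffineMap.lineMap x y : ℝ →ᵃ[ℝ] _) s = x + s • (y - x) := by
    intro s; simp [AffineMap.lineMap_apply]; abel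
  have hconvφ : ConvexOn ℝ Set.univ φ := by
    have h := hconv.comp_affineMap (AffineMap.lineMap x y : ℝ →ᵃ[ℝ] _)
    have hpre : (AffineMap.lineMap x y : ℝ →ᵃ[ℝ] _) ⁻¹' Set.univ = Set.univ := by simp
    rw [hpre] at h
    exact h.congr (fun s _ => by simp [Function.comp, hline s, hφdef])
  have hg : HasGradientAt f (gradient f x) x := (hdiff x).hasGradientAt
  have hfd : HasFDerivAt f (InnerProductSpace.toDual ℝ _ (gradient f x)) x :=
    hasGradientAt_iff_hasFDerivAt.mp hg
  have hinner : HasDerivAt (fun s : ℝ => x + s • (y - x)) (y - x) 0 := by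
    simpa using ((hasDerivAt_id (0:ℝ)).smul_const (y - x)).const_add x
  have hφ' : HasDerivAt φ ⟪gradient f x, y - x⟫ 0 := by
    have hfd0 : HasFDerivAt f (InnerProductSpace.toDual ℝ _ (gradient f x))
        (x + (0:ℝ) • (y - x)) := by simpa using hfd
    have hcomp := hfd0.comp_hasDerivAt (x := (0:ℝ)) hinner
    simpa [hφdef, Function.comp_def, InnerProductSpace.toDual_apply_apply] using hcomp
  have hs := hconvφ.le_slope_of_hasDerivAt (Set.mem_univ 0) (Set.mem_univ 1) zero_lt_one hφ'
  have hsl : slope φ 0 1 = f y - f x := by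
    simp [slope_def_field, hφdef]
  linarith [hs.trans_eq hsl]

lemma sum_inv_sqrt_le (T : ℕ) : ∑ t ∈ Finset.Icc 1 T, 1 / Real.sqrt t ≤ 2 * Real.sqrt T := by
  induction T with
  | zero => simp
  | succ T ih =>
    rw [Finset.sum_Icc_succ_top (by omega : 1 ≤ T + 1)]
    have hb : (0:ℝ) < Real.sqrt (T + 1) := Real.sqrt_pos.mpr (by positivity)
    have ha2 : Real.sqrt (T:ℝ) ^ 2 = T := Real.sq_sqrt (by positivity)
    have hb2 : Real.sqrt ((T:ℝ) + 1) ^ 2 = (T:ℝ) + 1 := Real.sq_sqrt (by positivity)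
    have ha0 : (0:ℝ) ≤ Real.sqrt T := Real.sqrt_nonneg _
    have key : 1 / Real.sqrt ((T:ℝ)+1) ≤ 2 * Real.sqrt ((T:ℝ)+1) - 2 * Real.sqrt T := by
      rw [div_le_iff₀ hb]
      nlinarith [sq_nonneg (Real.sqrt ((T:ℝ)+1) - Real.sqrt T)]
    push_cast
    push_cast at ih
    linarith

lemma telescope_bound (a c : ℕ → ℝ) (M : ℝ) (hc0 : ∀ t, 0 ≤ c t) (hcmono : Monotone c)
    (ha0 : ∀ t, 0 ≤ a t) :
    ∀ T, 1 ≤ T → (∀ t, 1 ≤ t → t ≤ T + 1 → a t ≤ M) →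
      ∑ t ∈ Finset.Icc 1 T, (a t - a (t+1)) * c t ≤ M * c T - a (T+1) * c T := by
  intro T
  induction T with
  | zero => omega
  | succ T ih =>
    intro _ haM
    rcases Nat.eq_or_lt_of_le (by omega : 1 ≤ T + 1) with h1 | h1
    · rw [← h1]
      simp only [Finset.Icc_self, Finset.sum_singleton]
      have := haM 1 le_rfl (by omega)
      nlinarith [hc0 1, ha0 2, this]
    · have hT : 1 ≤ T := by omega
      have ih' := ih hT (fun t h1 h2 => haM t h1 (by omega))
      rw [Finset.sum_Icc_succ_top (by omega : 1 ≤ T + 1)]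
      have hmono := hcmono (Nat.le_succ T)
      have hM1 := haM (T+1) (by omega) (by omega)
      nlinarith [ha0 (T+2), hc0 (T+1), hc0 T]

end Aux

/-- Theorem 1 (SGD under VAP, convergence in expectation): regret bound O(√T). -/
theorem stmt_0 (d T : ℕ) (hd : 1 ≤ d) (hT : 1 ≤ T)
    (η L F v₀ : ℝ) (hη : 0 < η) (hL : 0 ≤ L) (hF : 0 ≤ F) (hv₀ : 0 ≤ v₀)
    (xstar : EuclideanSpace ℝ (Fin d))
    (f : ℕ → EuclideanSpace ℝ (Fin d) → ℝ)
    (hconv : ∀ t ∈ Finset.Icc 1 T, ConvexOn ℝ Set.univ (f t))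
    (hdiff : ∀ t ∈ Finset.Icc 1 T, Differentiable ℝ (f t))
    (hgrad : ∀ t ∈ Finset.Icc 1 T, ∀ x, ‖gradient (f t) x‖ ≤ L)
    (xhat xbreve : ℕ → EuclideanSpace ℝ (Fin d))
    (hrec : ∀ t ∈ Finset.Icc 1 T,
      xhat (t+1) = xhat t - (η / Real.sqrt t) • gradient (f t) (xbreve t))
    (hvap : ∀ t ∈ Finset.Icc 1 T, ∀ i : Fin d,
      |(xbreve t - xhat t) i| ≤ v₀ / Real.sqrt t)
    (hdiam : ∀ t ∈ Finset.Icc 1 (T+1), (1/2) * ‖xstar - xhat t‖^2 ≤ F^2) :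
    ∑ t ∈ Finset.Icc 1 T, (f t (xbreve t) - f t xstar)
      ≤ η * L^2 * Real.sqrt T + (F^2 / η) * Real.sqrt T
        + 2 * Real.sqrt d * L * v₀ * Real.sqrt T := by
  classical
  set g : ℕ → EuclideanSpace ℝ (Fin d) := fun t => gradient (f t) (xbreve t) with hgdef
  set a : ℕ → ℝ := fun t => ‖xstar - xhat t‖^2 with hadef
  set c : ℕ → ℝ := fun t => Real.sqrt t / (2*η) with hcdef
  clear_value g a c
  have hc0 : ∀ t, 0 ≤ c t := fun t => by simp only [hcdef]; positivity
  have ha0 : ∀ t, 0 ≤ a t := fun t => by simp only [hadef]; positivity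
  have hcmono : Monotone c := by
    intro s t hst
    simp only [hcdef]
    gcongr <;> exact_mod_cast hst
  -- per-step bound
  have key : ∀ t ∈ Finset.Icc 1 T,
      f t (xbreve t) - f t xstar ≤ (a t - a (t+1)) * c t
        + (η * L^2 / 2) * (1 / Real.sqrt t)
        + (Real.sqrt d * L * v₀) * (1 / Real.sqrt t) := by
    intro t ht
    have ht1 : 1 ≤ t := (Finset.mem_Icc.mp ht).1
    have htpos : (0:ℝ) < t := by exact_mod_cast ht1
    have hst : (0:ℝ) < Real.sqrt t := Real.sqrt_pos.mpr htpos
    set e : ℝ := η / Real.sqrt t with hedef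
    have he : 0 < e := by positivity
    -- convexity
    have hcx : (inner ℝ (g t) (xstar - xbreve t) : ℝ) ≤ f t xstar - f t (xbreve t) := by
      simp only [hgdef]
      exact grad_ineq (hconv t ht) (hdiff t ht) (xbreve t) xstar
    -- split inner product
    have hsplit : (inner ℝ (g t) (xstar - xbreve t) : ℝ)
        = inner ℝ (g t) (xstar - xhat t) + inner ℝ (g t) (xhat t - xbreve t) := by
      have hx0 : xstar - xbreve t = (xstar - xhat t) + (xhat t - xbreve t) := by abel
      rw [hx0, inner_add_right]
    -- norm expansion
    have hx : xstar - xhat (t+1) = (xstar - xhat t) + e • g t := by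
      simp only [hgdef, hedef]
      rw [hrec t ht]
      module
    have hnorm : a (t+1) = a t + 2 * (e * inner ℝ (xstar - xhat t) (g t)) + e^2 * ‖g t‖^2 := by
      simp only [hadef, hx, norm_add_sq_real, real_inner_smul_right, norm_smul,
        Real.norm_eq_abs, mul_pow, sq_abs]
    have hgL : ‖g t‖ ≤ L := by simp only [hgdef]; exact hgrad t ht (xbreve t)
    have hgL2 : ‖g t‖^2 ≤ L^2 := by nlinarith [norm_nonneg (g t)]
    -- cross term bound
    have hvnorm : ‖xbreve t - xhat t‖ ≤ Real.sqrt d * (v₀ / Real.sqrt t) := by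
      have h1 : ‖xbreve t - xhat t‖ = Real.sqrt (∑ i, ‖(xbreve t - xhat t) i‖^2) :=
        EuclideanSpace.norm_eq _
      have h2 : ∑ i, ‖(xbreve t - xhat t) i‖^2 ≤ (d:ℝ) * (v₀ / Real.sqrt t)^2 := by
        calc ∑ i, ‖(xbreve t - xhat t) i‖^2
            ≤ ∑ _i : Fin d, (v₀ / Real.sqrt t)^2 := by
              apply Finset.sum_le_sum
              intro i _
              have := hvap t ht i
              have h0 : ‖(xbreve t - xhat t) i‖ = |(xbreve t - xhat t) i| := rfl
              rw [h0]
              nlinarith [abs_nonneg ((xbreve t - xhat t) i)]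
          _ = (d:ℝ) * (v₀ / Real.sqrt t)^2 := by
              rw [Finset.sum_const, Finset.card_univ, Fintype.card_fin, nsmul_eq_mul]
      calc ‖xbreve t - xhat t‖ = Real.sqrt (∑ i, ‖(xbreve t - xhat t) i‖^2) := h1
        _ ≤ Real.sqrt ((d:ℝ) * (v₀ / Real.sqrt t)^2) := Real.sqrt_le_sqrt h2
        _ = Real.sqrt d * (v₀ / Real.sqrt t) := by
            rw [Real.sqrt_mul (by positivity), Real.sqrt_sq (by positivity)]
    have hcross : (inner ℝ (g t) (xhat t - xbreve t) : ℝ)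
        ≥ -(L * (Real.sqrt d * (v₀ / Real.sqrt t))) := by
      have h1 : (inner ℝ (g t) (xbreve t - xhat t) : ℝ) ≤ ‖g t‖ * ‖xbreve t - xhat t‖ :=
        real_inner_le_norm _ _
      have h2 : ‖g t‖ * ‖xbreve t - xhat t‖ ≤ L * (Real.sqrt d * (v₀ / Real.sqrt t)) :=
        mul_le_mul hgL hvnorm (norm_nonneg _) hL
      have h3 : (inner ℝ (g t) (xhat t - xbreve t) : ℝ) = -(inner ℝ (g t) (xbreve t - xhat t) : ℝ) := by
        rw [show xhat t - xbreve t = -(xbreve t - xhat t) from by abel, inner_neg_right]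
      rw [h3]
      linarith
    -- main descent term bound
    have hdescent : -(inner ℝ (g t) (xstar - xhat t) : ℝ)
        ≤ (a t - a (t+1)) * c t + (η * L^2 / 2) * (1 / Real.sqrt t) := by
      have hcomm : (inner ℝ (g t) (xstar - xhat t) : ℝ) = inner ℝ (xstar - xhat t) (g t) :=
        real_inner_comm _ _
      rw [hcomm]
      have h2e : (0:ℝ) < 2 * e := by linarith
      rw [← mul_le_mul_iff_of_pos_right h2e]
      have hc1 : c t * (2 * e) = 1 := by
        simp only [hcdef, hedef]
        field_simp
      have hc2 : (η * L^2 / 2) * (1 / Real.sqrt t) * (2 * e) = e^2 * L^2 := by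
        simp only [hedef]
        have hsq : Real.sqrt t * Real.sqrt t = (t:ℝ) := Real.mul_self_sqrt htpos.le
        field_simp
      calc -(inner ℝ (xstar - xhat t) (g t) : ℝ) * (2 * e)
          = (a t - a (t+1)) + e^2 * ‖g t‖^2 := by linear_combination hnorm
        _ ≤ (a t - a (t+1)) + e^2 * L^2 := by nlinarith [sq_nonneg e, hgL2]
        _ = ((a t - a (t+1)) * c t + (η * L^2 / 2) * (1 / Real.sqrt t)) * (2 * e) := by
            rw [add_mul, mul_assoc, hc1, mul_one, hc2]
    -- combine
    have hfin := hcx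
    rw [hsplit] at hfin
    have hv : v₀ / Real.sqrt t = v₀ * (1 / Real.sqrt t) := by ring
    have : (Real.sqrt d * L * v₀) * (1 / Real.sqrt t) = L * (Real.sqrt d * (v₀ / Real.sqrt t)) := by
      ring
    linarith [hdescent, hcross, hfin]
  -- sum up
  have hsum := Finset.sum_le_sum key
  have hsum2 : ∑ t ∈ Finset.Icc 1 T, ((a t - a (t+1)) * c t
        + (η * L^2 / 2) * (1 / Real.sqrt t) + (Real.sqrt d * L * v₀) * (1 / Real.sqrt t))
      = (∑ t ∈ Finset.Icc 1 T, (a t - a (t+1)) * c t)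
        + (η * L^2 / 2) * (∑ t ∈ Finset.Icc 1 T, 1 / Real.sqrt t)
        + (Real.sqrt d * L * v₀) * (∑ t ∈ Finset.Icc 1 T, 1 / Real.sqrt t) := by
    rw [Finset.mul_sum, Finset.mul_sum, ← Finset.sum_add_distrib, ← Finset.sum_add_distrib]
  have haM : ∀ t, 1 ≤ t → t ≤ T + 1 → a t ≤ 2 * F^2 := by
    intro t h1 h2
    have := hdiam t (Finset.mem_Icc.mpr ⟨h1, h2⟩)
    simp only [hadef]
    linarith
  have htel := telescope_bound a c (2 * F^2) hc0 hcmono ha0 T hT haM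
  have htel2 : ∑ t ∈ Finset.Icc 1 T, (a t - a (t+1)) * c t ≤ (F^2 / η) * Real.sqrt T := by
    have h1 : 0 ≤ a (T+1) * c T := mul_nonneg (ha0 _) (hc0 _)
    have h2 : 2 * F^2 * c T = (F^2 / η) * Real.sqrt T := by
      simp only [hcdef]
      field_simp
    linarith [htel]
  have hinvsum := sum_inv_sqrt_le T
  have hinvsum_nonneg : 0 ≤ ∑ t ∈ Finset.Icc 1 T, 1 / Real.sqrt t := by
    apply Finset.sum_nonneg
    intro t _
    positivity
  have hsd : (0:ℝ) ≤ Real.sqrt d := Real.sqrt_nonneg _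
  have h2 : (η * L^2 / 2) * (∑ t ∈ Finset.Icc 1 T, 1 / Real.sqrt t)
      ≤ η * L^2 * Real.sqrt T := by
    nlinarith [hinvsum, hinvsum_nonneg, mul_nonneg (le_of_lt hη) (sq_nonneg L)]
  have h3 : (Real.sqrt d * L * v₀) * (∑ t ∈ Finset.Icc 1 T, 1 / Real.sqrt t)
      ≤ 2 * Real.sqrt d * L * v₀ * Real.sqrt T := by
    nlinarith [hinvsum, hinvsum_nonneg, mul_nonneg (mul_nonneg hsd hL) hv₀]
  calc ∑ t ∈ Finset.Icc 1 T, (f t (xbreve t) - f t xstar)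
      ≤ (∑ t ∈ Finset.Icc 1 T, (a t - a (t+1)) * c t)
        + (η * L^2 / 2) * (∑ t ∈ Finset.Icc 1 T, 1 / Real.sqrt t)
        + (Real.sqrt d * L * v₀) * (∑ t ∈ Finset.Icc 1 T, 1 / Real.sqrt t) := by
        rw [← hsum2]; exact hsum
    _ ≤ η * L^2 * Real.sqrt T + (F^2 / η) * Real.sqrt T
        + 2 * Real.sqrt d * L * v₀ * Real.sqrt T := by linarith [htel2, h2, h3]
end

section
/- Fix d ≥ 1, T ≥ 1, reals η > 0, L ≥ 0, F ≥ 0, x* ∈ ℝ^d, and nonnegative reals γ_1, …, γ_T. For each t let f_t : ℝ^d → ℝ be convex and differentiable with ‖∇f_t(x)‖₂ ≤ L for all x, let η_t = η/√t, let x_{t+1} = x_t − η_t ∇f_t(x̃_t), and suppose x̃_t = x_t + ū_t c_t where ū_t is a real with 0 ≤ ū_t ≤ η L/√t and c_t ∈ ℝ^d with ‖c_t‖₂ ≤ γ_t. Assume ½‖x* − x_t‖₂² ≤ F² for all t = 1,…,T+1. Then ∑_{t=1}^T ( f_t(x̃_t) − f_t(x*) ) ≤ η L² √T + (F²/η) √T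 + ∑_{t=1}^T (η/√t) L² γ_t. -/
open Real

lemma grad_ineq_aux {d : ℕ} {f : EuclideanSpace ℝ (Fin d) → ℝ}
    (hconv : ConvexOn ℝ Set.univ f) (hdiff : Differentiable ℝ f)
    (x y : EuclideanSpace ℝ (Fin d)) :
    f x + inner ℝ (gradient f x) (y - x) ≤ f y := by
  set g : ℝ → ℝ := fun s => f (x + s • (y - x)) with hgdef
  have hmap : HasDerivAt (fun s : ℝ => x + s • (y - x)) (y - x) 0 := by
    simpa using ((hasDerivAt_id (0:ℝ)).smul_const (y - x)).const_add x
  have hgrad : HasGradientAt f (gradient f x) x := (hdiff x).hasGradientAt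
  have hfd : HasFDerivAt f (InnerProductSpace.toDual ℝ _ (gradient f x))
      ((fun s : ℝ => x + s • (y - x)) 0) := by simpa using hgrad.hasFDerivAt
  have hgd : HasDerivAt g ((inner ℝ (gradient f x) (y - x) : ℝ)) 0 := by
    convert hfd.comp_hasDerivAt (0:ℝ) hmap using 1
    · rfl
    · rfl
    · rfl
    · simp [InnerProductSpace.toDual_apply_apply]
  have hgc : ConvexOn ℝ Set.univ g := by
    have h := hconv.comp_affineMap (AffineMap.lineMap x y : ℝ →ᵃ[ℝ] EuclideanSpace ℝ (Fin d))
    simp only [Set.preimage_univ] at h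
    have he : g = f ∘ (AffineMap.lineMap x y : ℝ →ᵃ[ℝ] EuclideanSpace ℝ (Fin d)) := by
      funext s
      show f (x + s • (y - x)) = f (AffineMap.lineMap x y s)
      rw [AffineMap.lineMap_apply, vsub_eq_sub, vadd_eq_add]
      congr 1
      abel
    rw [he]
    exact h
  have hs := hgc.le_slope_of_hasDerivAt (Set.mem_univ (0:ℝ)) (Set.mem_univ (1:ℝ)) one_pos hgd
  have h0 : g 0 = f x := by simp [hgdef]
  have h1 : g 1 = f y := by
    have : x + (1:ℝ) • (y - x) = y := by module
    simp [hgdef, this]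
  rw [slope_def_field, h0, h1] at hs
  simp only [sub_zero, div_one] at hs
  linarith

lemma abel_aux (a b : ℕ → ℝ) (C : ℝ) (hb : Monotone b) (hb0 : 0 ≤ b 0) :
    ∀ T : ℕ, (∀ t ∈ Finset.Icc 1 (T+1), 0 ≤ a t ∧ a t ≤ C) →
    ∑ t ∈ Finset.Icc 1 T, (a t - a (t+1)) * b t ≤ (C - a (T+1)) * b T := by
  intro T
  induction T with
  | zero =>
    intro h
    have h1 := h 1 (by simp)
    simp only [Finset.Icc_self, zero_add] at *
    have : ∑ t ∈ Finset.Icc 1 0, (a t - a (t+1)) * b t = 0 := by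
      rw [Finset.Icc_eq_empty (by omega)]; simp
    rw [this]
    exact mul_nonneg (by linarith [h1.1, h1.2]) hb0
  | succ T ih =>
    intro h
    have hprev := ih (fun t ht => h t (by
      simp only [Finset.mem_Icc] at ht ⊢; omega))
    rw [Finset.sum_Icc_succ_top (by omega : 1 ≤ T + 1)]
    have h1 := h (T+1) (by simp only [Finset.mem_Icc]; omega)
    have h2 := h (T+2) (by simp only [Finset.mem_Icc]; omega)
    have hbm : b T ≤ b (T+1) := hb (by omega)
    have hbn : 0 ≤ b T := le_trans hb0 (hb (Nat.zero_le T))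
    nlinarith [h1.1, h1.2, h2.1, h2.2]

lemma sqrt_sum_aux : ∀ T : ℕ, ∑ t ∈ Finset.Icc 1 T, (Real.sqrt t)⁻¹ ≤ 2 * Real.sqrt T := by
  intro T
  induction T with
  | zero => simp
  | succ T ih =>
    rw [Finset.sum_Icc_succ_top (by omega : 1 ≤ T + 1)]
    have hs : (0:ℝ) < Real.sqrt (T+1) := Real.sqrt_pos.mpr (by positivity)
    have hr : (0:ℝ) ≤ Real.sqrt T := Real.sqrt_nonneg _
    have h1 : (Real.sqrt ((T:ℝ)+1))^2 = (T:ℝ)+1 := Real.sq_sqrt (by positivity)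
    have h2 : (Real.sqrt (T:ℝ))^2 = (T:ℝ) := Real.sq_sqrt (by positivity)
    have hc : ((T+1 : ℕ) : ℝ) = (T:ℝ) + 1 := by push_cast; ring
    rw [hc] at *
    have key : (Real.sqrt ((T:ℝ)+1))⁻¹ ≤ 2 * (Real.sqrt ((T:ℝ)+1) - Real.sqrt (T:ℝ)) := by
      rw [inv_eq_one_div, div_le_iff₀ hs]
      nlinarith [sq_nonneg (Real.sqrt ((T:ℝ)+1) - Real.sqrt (T:ℝ))]
    linarith


/-- The deterministic risk bound (eq. 12) in the proof of Theorem 5: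
regret splits into step-size, diameter, and staleness-weighted terms. -/
theorem stmt_7 (d T : ℕ) (hd : 1 ≤ d) (hT : 1 ≤ T)
    (η L F : ℝ) (hη : 0 < η) (hL : 0 ≤ L) (hF : 0 ≤ F)
    (xstar : EuclideanSpace ℝ (Fin d))
    (γ : ℕ → ℝ) (hγ : ∀ t ∈ Finset.Icc 1 T, 0 ≤ γ t)
    (f : ℕ → EuclideanSpace ℝ (Fin d) → ℝ)
    (hconv : ∀ t ∈ Finset.Icc 1 T, ConvexOn ℝ Set.univ (f t))
    (hdiff : ∀ t ∈ Finset.Icc 1 T, Differentiable ℝ (f t))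
    (hgrad : ∀ t ∈ Finset.Icc 1 T, ∀ x, ‖gradient (f t) x‖ ≤ L)
    (x xtilde : ℕ → EuclideanSpace ℝ (Fin d))
    (ubar : ℕ → ℝ) (c : ℕ → EuclideanSpace ℝ (Fin d))
    (hrec : ∀ t ∈ Finset.Icc 1 T,
      x (t+1) = x t - (η / Real.sqrt t) • gradient (f t) (xtilde t))
    (hub : ∀ t ∈ Finset.Icc 1 T, 0 ≤ ubar t ∧ ubar t ≤ η * L / Real.sqrt t)
    (hdecomp : ∀ t ∈ Finset.Icc 1 T, xtilde t = x t + ubar t • c t)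
    (hc : ∀ t ∈ Finset.Icc 1 T, ‖c t‖ ≤ γ t)
    (hdiam : ∀ t ∈ Finset.Icc 1 (T+1), (1/2) * ‖xstar - x t‖^2 ≤ F^2) :
    ∑ t ∈ Finset.Icc 1 T, (f t (xtilde t) - f t xstar)
      ≤ η * L^2 * Real.sqrt T + (F^2 / η) * Real.sqrt T
        + ∑ t ∈ Finset.Icc 1 T, (η / Real.sqrt t) * L^2 * γ t := by
  set a : ℕ → ℝ := fun t => ‖xstar - x t‖^2 / 2 with hadef
  -- per-step bound
  have step : ∀ t ∈ Finset.Icc 1 T,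
      f t (xtilde t) - f t xstar ≤ (a t - a (t+1)) * Real.sqrt t / η
        + η * L^2 / 2 * (Real.sqrt t)⁻¹ + (η / Real.sqrt t) * L^2 * γ t := by
    intro t ht
    have ht1 : 1 ≤ t := (Finset.mem_Icc.mp ht).1
    have hst : (0:ℝ) < Real.sqrt t := Real.sqrt_pos.mpr (by
      have : (1:ℝ) ≤ (t:ℝ) := by exact_mod_cast ht1
      linarith)
    set st := Real.sqrt t with hstdef
    set e : ℝ := η / st with hedef
    have he : 0 < e := div_pos hη hst
    set g : EuclideanSpace ℝ (Fin d) := gradient (f t) (xtilde t) with hgdef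
    set I1 : ℝ := inner ℝ (xstar - x t) g with hI1def
    -- gradient inequality
    have hA := grad_ineq_aux (hconv t ht) (hdiff t ht) (xtilde t) xstar
    have hsplit : (inner ℝ g (xstar - xtilde t) : ℝ) = I1 - ubar t * inner ℝ g (c t) := by
      rw [hdecomp t ht]
      have : xstar - (x t + ubar t • c t) = (xstar - x t) - ubar t • c t := by module
      rw [this, inner_sub_right, real_inner_smul_right, hI1def, real_inner_comm]
    rw [← hgdef] at hA
    have hA' : f t (xtilde t) - f t xstar ≤ -I1 + ubar t * inner ℝ g (c t) := by
      linarith [hA, hsplit]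
    -- norm expansion
    have hx1 : xstar - x (t+1) = (xstar - x t) + e • g := by
      rw [hrec t ht]; module
    have hn := norm_add_sq_real (xstar - x t) (e • g)
    rw [← hx1, real_inner_smul_right, norm_smul, Real.norm_eq_abs, abs_of_pos he] at hn
    have hexp : 2 * a (t+1) = 2 * a t + 2 * e * I1 + e^2 * ‖g‖^2 := by
      simp only [hadef, hI1def]
      have : (e * ‖g‖)^2 = e^2 * ‖g‖^2 := by ring
      rw [hn, this]; ring
    have hImu : -I1 = (a t - a (t+1)) / e + e / 2 * ‖g‖^2 := by
      field_simp
      nlinarith [hexp]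
    -- bound on the staleness term
    have hgl : ‖g‖ ≤ L := hgrad t ht (xtilde t)
    have hgc2 : ‖g‖^2 ≤ L^2 := by nlinarith [norm_nonneg g]
    have hγt : 0 ≤ γ t := hγ t ht
    have hP : (inner ℝ g (c t) : ℝ) ≤ L * γ t := by
      calc (inner ℝ g (c t) : ℝ) ≤ ‖g‖ * ‖c t‖ := real_inner_le_norm g (c t)
        _ ≤ L * γ t := mul_le_mul hgl (hc t ht) (norm_nonneg _) hL
    have hubt := hub t ht
    have hstale : ubar t * inner ℝ g (c t) ≤ e * L^2 * γ t := by
      have h1 : ubar t * inner ℝ g (c t) ≤ ubar t * (L * γ t) :=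
        mul_le_mul_of_nonneg_left hP hubt.1
      have h2 : ubar t * (L * γ t) ≤ (e * L) * (L * γ t) := by
        apply mul_le_mul_of_nonneg_right _ (mul_nonneg hL hγt)
        calc ubar t ≤ η * L / st := hubt.2
          _ = e * L := by rw [hedef]; ring
      calc ubar t * inner ℝ g (c t) ≤ (e * L) * (L * γ t) := le_trans h1 h2
        _ = e * L^2 * γ t := by ring
    -- combine
    have hmain : f t (xtilde t) - f t xstar ≤ (a t - a (t+1)) / e + e / 2 * L^2 + e * L^2 * γ t := by
      have := mul_le_mul_of_nonneg_left hgc2 (le_of_lt (half_pos he))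
      linarith [hA', hImu, hstale]
    have e1 : (a t - a (t+1)) * st / η = (a t - a (t+1)) / e := by
      rw [hedef]; field_simp
    have e2 : η * L^2 / 2 * st⁻¹ = e / 2 * L^2 := by
      rw [hedef, div_eq_mul_inv]; ring
    rw [e1, e2]
    exact hmain
  -- sum it up
  have hsum := Finset.sum_le_sum step
  rw [Finset.sum_add_distrib, Finset.sum_add_distrib] at hsum
  -- telescoping term
  have habel : ∑ t ∈ Finset.Icc 1 T, (a t - a (t+1)) * Real.sqrt t / η
      ≤ (F^2 / η) * Real.sqrt T := by
    have hb : Monotone (fun n : ℕ => Real.sqrt n) := by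
      intro i j hij
      exact Real.sqrt_le_sqrt (by exact_mod_cast hij)
    have hAB := abel_aux a (fun n : ℕ => Real.sqrt n) (F^2) hb (by simp) T
      (fun t ht => ⟨by positivity, by
        have := hdiam t ht
        simp only [hadef]; linarith⟩)
    have hdiv : ∑ t ∈ Finset.Icc 1 T, (a t - a (t+1)) * Real.sqrt t / η
        = (∑ t ∈ Finset.Icc 1 T, (a t - a (t+1)) * Real.sqrt t) / η := by
      rw [Finset.sum_div]
    rw [hdiv]
    have haT1 : 0 ≤ a (T+1) := by positivity
    have hsT : 0 ≤ Real.sqrt T := Real.sqrt_nonneg _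
    have : (∑ t ∈ Finset.Icc 1 T, (a t - a (t+1)) * Real.sqrt t) ≤ F^2 * Real.sqrt T := by
      calc _ ≤ (F^2 - a (T+1)) * Real.sqrt T := hAB
        _ ≤ F^2 * Real.sqrt T := by nlinarith
    calc (∑ t ∈ Finset.Icc 1 T, (a t - a (t+1)) * Real.sqrt t) / η
        ≤ (F^2 * Real.sqrt T) / η := by gcongr
      _ = (F^2 / η) * Real.sqrt T := by ring
  -- step-size term
  have hstep : ∑ t ∈ Finset.Icc 1 T, η * L^2 / 2 * (Real.sqrt t)⁻¹
      ≤ η * L^2 * Real.sqrt T := by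
    rw [← Finset.mul_sum]
    calc η * L^2 / 2 * ∑ t ∈ Finset.Icc 1 T, (Real.sqrt t)⁻¹
        ≤ η * L^2 / 2 * (2 * Real.sqrt T) :=
          mul_le_mul_of_nonneg_left (sqrt_sum_aux T) (by positivity)
      _ = η * L^2 * Real.sqrt T := by ring
  linarith [hsum, habel, hstep]
end
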